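/- For every S ∈ M, the number of pairs (f, g) ∈ P that cover S equals |P| / |M|; in particular, all sets S ∈ M are covered by the same number of pairs from P. -/

import Mathlib

/-- `μ_S(f) = ∑_{T ⊆ S, |T| = r} ∏_{i ∈ T} |f⁻¹(i)|`. -/
def muS (r n m : ℕ) (S : Finset (Fin n)) (f : Fin m → Fin n) : ℕ :=
  ∑ T ∈ S.powersetCard r, ∏ i ∈ T, (Finset.univ.filter fun j => f j = i).card

/-- `φ(f) = ∑_{S ∈ M} μ_S(f)`. -/
def phiM (r n m : ℕ) (M : Finset (Finset (Fin n))) (f : Fin m → Fin n) : ℕ :=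
  ∑ S ∈ M, muS r n m S f

/-- `f` is `ℓ`-good if `1 ≤ φ(f) ≤ ℓ`. -/
def IsGood (r n m : ℕ) (M : Finset (Finset (Fin n))) (ℓ : ℕ) (f : Fin m → Fin n) : Prop :=
  1 ≤ phiM r n m M f ∧ phiM r n m M f ≤ ℓ

/-- `g` complements `f`: there is exactly one `r`-element `I ⊆ [m]` with
`f(I) ∪ g(I) ∈ M` and `g(i) = f(i)` for all `i ∉ I`. -/
def Complements (r n m : ℕ) (M : Finset (Finset (Fin n))) (f g : Fin m → Fin n) : Prop :=
  ∃! I : Finset (Fin m), I.card = r ∧ (I.image f ∪ I.image g) ∈ M ∧ ∀ i ∉ I, g i = f i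

/-- The pair `(f, g)` covers `S` if `f(I) ∪ g(I) = S` for a witnessing `I`. -/
def Covers (r n m : ℕ) (f g : Fin m → Fin n) (S : Finset (Fin n)) : Prop :=
  ∃ I : Finset (Fin m), I.card = r ∧ (I.image f ∪ I.image g) = S ∧ ∀ i ∉ I, g i = f i


open Finset

variable {n m r : ℕ} {M : Finset (Finset (Fin n))}

lemma fiber_comp (σ : Equiv.Perm (Fin n)) (f : Fin m → Fin n) (i : Fin n) :
    (Finset.univ.filter fun j => (σ ∘ f) j = σ i).card
      = (Finset.univ.filter fun j => f j = i).card := by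
  congr 1
  apply filter_congr
  intro j _
  simp [σ.injective.eq_iff]

lemma muS_comp (σ : Equiv.Perm (Fin n)) (S : Finset (Fin n)) (f : Fin m → Fin n) :
    muS r n m (S.image σ) (σ ∘ f) = muS r n m S f := by
  unfold muS
  have h : S.image ⇑σ = S.map σ.toEmbedding := by
    rw [map_eq_image]; rfl
  rw [h, powersetCard_map, Finset.sum_map]
  refine Finset.sum_congr rfl fun T hT => ?_
  rw [RelEmbedding.coe_toEmbedding, mapEmbedding_apply, Finset.prod_map]
  exact Finset.prod_congr rfl fun i _ => fiber_comp σ f i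
lemma image_image_symm (σ : Equiv.Perm (Fin n)) (U : Finset (Fin n)) :
    (U.image ⇑σ.symm).image ⇑σ = U := by
  rw [Finset.image_image]; simp

lemma image_symm_image (σ : Equiv.Perm (Fin n)) (U : Finset (Fin n)) :
    (U.image ⇑σ).image ⇑σ.symm = U := by
  rw [Finset.image_image]; simp

lemma hM_symm (σ : Equiv.Perm (Fin n)) (hM : ∀ U, U ∈ M ↔ U.image σ ∈ M) :
    ∀ U, U ∈ M ↔ U.image ⇑σ.symm ∈ M := by
  intro U
  rw [hM (U.image ⇑σ.symm), image_image_symm]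

lemma phiM_comp (σ : Equiv.Perm (Fin n)) (hM : ∀ U, U ∈ M ↔ U.image σ ∈ M)
    (f : Fin m → Fin n) : phiM r n m M (σ ∘ f) = phiM r n m M f := by
  unfold phiM
  refine Finset.sum_nbij' (i := fun U => U.image ⇑σ.symm) (j := fun U => U.image ⇑σ)
    (fun U hU => ((hM_symm σ hM) U).1 hU) (fun U hU => (hM U).1 hU)
    (fun U _ => image_image_symm σ U) (fun U _ => image_symm_image σ U)
    (fun U _ => ?_)
  conv_lhs => rw [← image_image_symm σ U]
  rw [muS_comp σ (U.image ⇑σ.symm) f]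

lemma isGood_comp (σ : Equiv.Perm (Fin n)) (hM : ∀ U, U ∈ M ↔ U.image σ ∈ M)
    (ℓ : ℕ) (f : Fin m → Fin n) :
    IsGood r n m M ℓ (σ ∘ f) ↔ IsGood r n m M ℓ f := by
  unfold IsGood
  rw [phiM_comp σ hM]

lemma complements_comp (σ : Equiv.Perm (Fin n)) (hM : ∀ U, U ∈ M ↔ U.image σ ∈ M)
    (f g : Fin m → Fin n) :
    Complements r n m M (σ ∘ f) (σ ∘ g) ↔ Complements r n m M f g := by
  unfold Complements
  apply existsUnique_congr
  intro I
  have h1 : I.image (σ ∘ f) ∪ I.image (σ ∘ g) = (I.image f ∪ I.image g).image ⇑σ := by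
    rw [Finset.image_union, Finset.image_image, Finset.image_image]
  rw [h1, ← hM]
  simp [σ.injective.eq_iff]

lemma covers_comp (σ : Equiv.Perm (Fin n)) (U : Finset (Fin n)) (f g : Fin m → Fin n) :
    Covers r n m (σ ∘ f) (σ ∘ g) (U.image ⇑σ) ↔ Covers r n m f g U := by
  unfold Covers
  apply exists_congr
  intro I
  have h1 : I.image (σ ∘ f) ∪ I.image (σ ∘ g) = (I.image f ∪ I.image g).image ⇑σ := by
    rw [Finset.image_union, Finset.image_image, Finset.image_image]
  rw [h1]
  constructor
  · rintro ⟨hc, he, hoff⟩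
    exact ⟨hc, Finset.image_injective σ.injective he, fun i hi => by
      have := hoff i hi; simpa [σ.injective.eq_iff] using this⟩
  · rintro ⟨hc, he, hoff⟩
    exact ⟨hc, by rw [he], fun i hi => by simp [hoff i hi]⟩

lemma count_comp (σ : Equiv.Perm (Fin n)) (hM : ∀ U, U ∈ M ↔ U.image σ ∈ M)
    (ℓ : ℕ) (U : Finset (Fin n)) :
    Nat.card {fg : (Fin m → Fin n) × (Fin m → Fin n) |
        (IsGood r n m M ℓ fg.1 ∧ Complements r n m M fg.1 fg.2) ∧
          Covers r n m fg.1 fg.2 U}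
      = Nat.card {fg : (Fin m → Fin n) × (Fin m → Fin n) |
        (IsGood r n m M ℓ fg.1 ∧ Complements r n m M fg.1 fg.2) ∧
          Covers r n m fg.1 fg.2 (U.image ⇑σ)} := by
  apply Nat.card_congr
  refine ⟨fun x => ⟨(σ ∘ x.1.1, σ ∘ x.1.2), ?_⟩,
          fun x => ⟨(σ.symm ∘ x.1.1, σ.symm ∘ x.1.2), ?_⟩, ?_, ?_⟩
  · obtain ⟨⟨hg, hc⟩, hcov⟩ := x.2
    exact ⟨⟨(isGood_comp σ hM ℓ _).2 hg, (complements_comp σ hM _ _).2 hc⟩,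
      (covers_comp σ U _ _).2 hcov⟩
  · obtain ⟨⟨hg, hc⟩, hcov⟩ := x.2
    have hM' := hM_symm σ hM
    refine ⟨⟨(isGood_comp σ.symm hM' ℓ _).2 hg, (complements_comp σ.symm hM' _ _).2 hc⟩, ?_⟩
    have := (covers_comp σ.symm (U.image ⇑σ) x.1.1 x.1.2).2 hcov
    rwa [image_symm_image σ U] at this
  · intro x
    apply Subtype.ext
    ext j <;> simp
  · intro x
    apply Subtype.ext
    ext j <;> simp
lemma exists_swap_perm (hdisj : (M : Set (Finset (Fin n))).Pairwise fun S T => Disjoint S T)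
    (hcard : ∀ S ∈ M, S.card = 2 * r) (S T : Finset (Fin n)) (hS : S ∈ M) (hT : T ∈ M) :
    ∃ σ : Equiv.Perm (Fin n), (∀ U, U ∈ M ↔ U.image ⇑σ ∈ M) ∧ S.image ⇑σ = T := by
  by_cases hne : S = T
  · exact ⟨Equiv.refl _, fun U => by simp, by simp [hne]⟩
  have hDST : Disjoint S T := hdisj hS hT hne
  have hcc : S.card = T.card := by rw [hcard S hS, hcard T hT]
  classical
  let e : ↥S ≃ ↥T := Finset.equivOfCardEq hcc
  let fn : Fin n → Fin n := fun x =>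
    if h : x ∈ S then (e ⟨x, h⟩ : Fin n)
    else if h' : x ∈ T then (e.symm ⟨x, h'⟩ : Fin n) else x
  have hfnS : ∀ x (h : x ∈ S), fn x = (e ⟨x, h⟩ : Fin n) := by
    intro x h; simp only [fn, dif_pos h]
  have hfnT : ∀ x (h : x ∈ T), fn x = (e.symm ⟨x, h⟩ : Fin n) := by
    intro x h
    have hxS : x ∉ S := Finset.disjoint_right.1 hDST h
    simp only [fn, dif_neg hxS, dif_pos h]
  have hfnO : ∀ x, x ∉ S → x ∉ T → fn x = x := by
    intro x h h'; simp only [fn, dif_neg h, dif_neg h']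
  have hinv : Function.Involutive fn := by
    intro x
    by_cases h : x ∈ S
    · rw [hfnS x h]
      have h1 : ((e ⟨x, h⟩ : ↥T) : Fin n) ∈ T := (e ⟨x, h⟩).2
      rw [hfnT _ h1]
      simp
    · by_cases h' : x ∈ T
      · rw [hfnT x h']
        have h1 : ((e.symm ⟨x, h'⟩ : ↥S) : Fin n) ∈ S := (e.symm ⟨x, h'⟩).2
        rw [hfnS _ h1]
        simp
      · rw [hfnO x h h', hfnO x h h']
  let σ : Equiv.Perm (Fin n) := hinv.toPerm fn
  have hσ : ⇑σ = fn := rfl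
  have himS : S.image ⇑σ = T := by
    rw [hσ]
    apply Finset.Subset.antisymm
    · intro y hy
      obtain ⟨x, hx, rfl⟩ := Finset.mem_image.1 hy
      rw [hfnS x hx]
      exact (e ⟨x, hx⟩).2
    · intro y hy
      have h1 : ((e.symm ⟨y, hy⟩ : ↥S) : Fin n) ∈ S := (e.symm ⟨y, hy⟩).2
      refine Finset.mem_image.2 ⟨_, h1, ?_⟩
      rw [hfnS _ h1]
      simp
  have himT : T.image ⇑σ = S := by
    rw [hσ]
    apply Finset.Subset.antisymm
    · intro y hy
      obtain ⟨x, hx, rfl⟩ := Finset.mem_image.1 hy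
      rw [hfnT x hx]
      exact (e.symm ⟨x, hx⟩).2
    · intro y hy
      have h1 : ((e ⟨y, hy⟩ : ↥T) : Fin n) ∈ T := (e ⟨y, hy⟩).2
      refine Finset.mem_image.2 ⟨_, h1, ?_⟩
      rw [hfnT _ h1]
      simp
  have hfwd : ∀ U ∈ M, U.image ⇑σ ∈ M := by
    intro U hU
    by_cases h1 : U = S
    · rw [h1, himS]; exact hT
    by_cases h2 : U = T
    · rw [h2, himT]; exact hS
    have hUS : Disjoint U S := hdisj hU hS h1
    have hUT : Disjoint U T := hdisj hU hT h2
    have : U.image ⇑σ = U := by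
      rw [hσ]
      have : ∀ x ∈ U, fn x = x := fun x hx =>
        hfnO x (Finset.disjoint_left.1 hUS hx) (Finset.disjoint_left.1 hUT hx)
      calc U.image fn = U.image id := Finset.image_congr fun x hx => this x hx
        _ = U := Finset.image_id
    rw [this]; exact hU
  refine ⟨σ, fun U => ⟨hfwd U, fun h => ?_⟩, himS⟩
  have h2 := hfwd _ h
  have h3 : (U.image ⇑σ).image ⇑σ = U := by
    rw [hσ, Finset.image_image]
    calc U.image (fn ∘ fn) = U.image id := Finset.image_congr fun x _ => hinv x
      _ = U := Finset.image_id
  rwa [h3] at h2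
lemma natCard_setOf {α : Type*} [Fintype α] (p : α → Prop) [DecidablePred p] :
    Nat.card {x | p x} = (Finset.univ.filter p).card := by
  rw [Nat.card_eq_fintype_card]
  exact Fintype.card_subtype p

theorem pairs_cover_equally (r n m : ℕ) (hr : 0 < r) (M : Finset (Finset (Fin n)))
    (hcard : ∀ S ∈ M, S.card = 2 * r)
    (hdisj : (M : Set (Finset (Fin n))).Pairwise fun S T => Disjoint S T)
    (hmax : ∀ S' : Finset (Fin n), S'.card = 2 * r → (∀ S ∈ M, Disjoint S' S) → S' ∈ M)
    (S : Finset (Fin n)) (hS : S ∈ M) :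
    Nat.card {fg : (Fin m → Fin n) × (Fin m → Fin n) |
        (IsGood r n m M (200 * 4 ^ r) fg.1 ∧ Complements r n m M fg.1 fg.2) ∧
          Covers r n m fg.1 fg.2 S} * M.card =
      Nat.card {fg : (Fin m → Fin n) × (Fin m → Fin n) |
        IsGood r n m M (200 * 4 ^ r) fg.1 ∧ Complements r n m M fg.1 fg.2} := by
  classical
  set ℓ := 200 * 4 ^ r with hℓ
  set Pred : (Fin m → Fin n) × (Fin m → Fin n) → Prop :=
    fun fg => IsGood r n m M ℓ fg.1 ∧ Complements r n m M fg.1 fg.2 with hPred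
  -- counts are equal across M
  have hcnt : ∀ T ∈ M,
      Nat.card {fg : (Fin m → Fin n) × (Fin m → Fin n) |
        Pred fg ∧ Covers r n m fg.1 fg.2 T}
      = Nat.card {fg : (Fin m → Fin n) × (Fin m → Fin n) |
        Pred fg ∧ Covers r n m fg.1 fg.2 S} := by
    intro T hT
    obtain ⟨σ, hM, himg⟩ := exists_swap_perm hdisj hcard T S hT hS
    rw [← himg]
    exact count_comp σ hM ℓ T
  -- decomposition
  have hdecomp : (Finset.univ.filter Pred).card
      = ∑ T ∈ M, (Finset.univ.filter
          fun fg => Pred fg ∧ Covers r n m fg.1 fg.2 T).card := by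
    have hU : Finset.univ.filter Pred
        = M.biUnion fun T => Finset.univ.filter
            fun fg => Pred fg ∧ Covers r n m fg.1 fg.2 T := by
      ext fg
      simp only [Finset.mem_biUnion, Finset.mem_filter, Finset.mem_univ, true_and]
      constructor
      · intro h
        obtain ⟨I, ⟨hcardI, hmem, hoff⟩, _⟩ := h.2
        exact ⟨_, hmem, h, I, hcardI, rfl, hoff⟩
      · rintro ⟨T, hT, h, _⟩
        exact h
    rw [hU]
    apply Finset.card_biUnion
    intro T hT T' hT' hne
    unfold Function.onFun
    rw [Finset.disjoint_left]
    intro fg h1 h2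
    rw [Finset.mem_filter] at h1 h2
    obtain ⟨-, hP, I1, hc1, he1, ho1⟩ := h1
    obtain ⟨-, -, I2, hc2, he2, ho2⟩ := h2
    obtain ⟨I, -, huniq⟩ := hP.2
    have e1 : I1 = I := huniq I1 ⟨hc1, he1 ▸ hT, ho1⟩
    have e2 : I2 = I := huniq I2 ⟨hc2, he2 ▸ hT', ho2⟩
    exact hne (by rw [← he1, ← he2, e1, e2])
  -- convert Nat.card to filter cards
  have key : ∀ T : Finset (Fin n),
      Nat.card {fg : (Fin m → Fin n) × (Fin m → Fin n) |
        Pred fg ∧ Covers r n m fg.1 fg.2 T}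
      = (Finset.univ.filter fun fg => Pred fg ∧ Covers r n m fg.1 fg.2 T).card :=
    fun T => natCard_setOf _
  have keyP : Nat.card {fg : (Fin m → Fin n) × (Fin m → Fin n) | Pred fg}
      = (Finset.univ.filter Pred).card := natCard_setOf _
  calc Nat.card {fg : (Fin m → Fin n) × (Fin m → Fin n) |
        Pred fg ∧ Covers r n m fg.1 fg.2 S} * M.card
      = ∑ _T ∈ M, Nat.card {fg : (Fin m → Fin n) × (Fin m → Fin n) |
          Pred fg ∧ Covers r n m fg.1 fg.2 S} := by
        rw [Finset.sum_const, smul_eq_mul, mul_comm]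
    _ = ∑ T ∈ M, Nat.card {fg : (Fin m → Fin n) × (Fin m → Fin n) |
          Pred fg ∧ Covers r n m fg.1 fg.2 T} :=
        (Finset.sum_congr rfl fun T hT => (hcnt T hT)).symm
    _ = ∑ T ∈ M, (Finset.univ.filter
          fun fg => Pred fg ∧ Covers r n m fg.1 fg.2 T).card :=
        Finset.sum_congr rfl fun T _ => key T
    _ = (Finset.univ.filter Pred).card := hdecomp.symm
    _ = Nat.card {fg : (Fin m → Fin n) × (Fin m → Fin n) | Pred fg} := keyP.symm
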